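/- arXiv:2004.00586 — 3 statements merged into one kernel-verified Lean document; each statement's English description precedes it below -/
import Mathlib

section
/- Let A, B ∈ GL_n(ℤ) be hyperbolic (no eigenvalues of absolute value 1). If Φ: ℤⁿ ⋊_A ℤ → ℤⁿ ⋊_B ℤ is a group isomorphism, then Φ maps the subgroup ℤⁿ × {0} onto ℤⁿ × {0}. -/
/-- The additive automorphism of `ℤⁿ` induced by a matrix `A ∈ GL_n(ℤ)`. -/
def glToAddAut {n : ℕ} (A : Matrix.GeneralLinearGroup (Fin n) ℤ) : AddAut (Fin n → ℤ) where
  toFun v := (A : Matrix (Fin n) (Fin n) ℤ).mulVec v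
  invFun v := ((A⁻¹ : Matrix.GeneralLinearGroup (Fin n) ℤ) : Matrix (Fin n) (Fin n) ℤ).mulVec v
  left_inv v := by
    simp only [Matrix.mulVec_mulVec]
    simp
  right_inv v := by
    simp only [Matrix.mulVec_mulVec]
    simp
  map_add' x y := Matrix.mulVec_add _ x y

/-- The action of `ℤ` on `ℤⁿ` given by powers of `A`. -/
def glPhi {n : ℕ} (A : Matrix.GeneralLinearGroup (Fin n) ℤ) :
    Multiplicative ℤ →* MulAut (Multiplicative (Fin n → ℤ)) :=
  zpowersHom _ (AddEquiv.toMultiplicative (glToAddAut A))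

/-- The group `ℤⁿ ⋊_A ℤ`, with multiplication `(x,i)(y,j) = (x + Aⁱ y, i + j)`. -/
abbrev Gamma {n : ℕ} (A : Matrix.GeneralLinearGroup (Fin n) ℤ) :=
  Multiplicative (Fin n → ℤ) ⋊[glPhi A] Multiplicative ℤ

/-- `A ∈ GL_n(ℤ)` is hyperbolic if no complex eigenvalue has absolute value 1. -/
def IsHyperbolic {n : ℕ} (A : Matrix.GeneralLinearGroup (Fin n) ℤ) : Prop :=
  ∀ μ : ℂ, ((A : Matrix (Fin n) (Fin n) ℤ).map (Int.cast : ℤ → ℂ)).charpoly.IsRoot μ →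
    ‖μ‖ ≠ 1

open SemidirectProduct Matrix Polynomial
open scoped commutatorElement

lemma det_one_sub_ne_zero {n : ℕ} (A : Matrix.GeneralLinearGroup (Fin n) ℤ)
    (hA : IsHyperbolic A) : ((1 : Matrix (Fin n) (Fin n) ℤ) - A).det ≠ 0 := by
  intro h
  apply hA 1 _ (by simp)
  show (((A : Matrix (Fin n) (Fin n) ℤ)).map (Int.cast : ℤ → ℂ)).charpoly.eval 1 = 0
  have key : (((A : Matrix (Fin n) (Fin n) ℤ)).map (Int.cast : ℤ → ℂ)).charpoly.eval 1
      = ((1 : Matrix (Fin n) (Fin n) ℂ) - (A : Matrix (Fin n) (Fin n) ℤ).map (Int.cast : ℤ → ℂ)).det := by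
    rw [Matrix.charpoly, ← Polynomial.coe_evalRingHom, RingHom.map_det]
    congr 1
    ext i j
    by_cases hij : i = j
    · subst hij
      simp [Matrix.charmatrix_apply_eq, Matrix.one_apply, Matrix.map_apply, Matrix.sub_apply]
    · simp [Matrix.charmatrix_apply_ne _ _ _ hij, Matrix.one_apply_ne hij, Matrix.map_apply,
        Matrix.sub_apply]
  have hm : ((1 : Matrix (Fin n) (Fin n) ℤ) - A).map (Int.cast : ℤ → ℂ)
      = 1 - (A : Matrix (Fin n) (Fin n) ℤ).map (Int.cast : ℤ → ℂ) := by
    ext i j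
    by_cases hij : i = j <;>
      simp [Matrix.map_apply, Matrix.one_apply, hij, Matrix.sub_apply]
  have hm2 : ((1 : Matrix (Fin n) (Fin n) ℤ) - A).map (Int.cast : ℤ → ℂ)
      = (Int.castRingHom ℂ).mapMatrix ((1 : Matrix (Fin n) (Fin n) ℤ) - (A : Matrix (Fin n) (Fin n) ℤ)) := rfl
  rw [key, ← hm, hm2, ← RingHom.map_det (Int.castRingHom ℂ), h]
  simp

lemma comm_elt {n : ℕ} (A : Matrix.GeneralLinearGroup (Fin n) ℤ) (y : Fin n → ℤ) :
    (inl (Multiplicative.ofAdd (((1 : Matrix (Fin n) (Fin n) ℤ) - A).mulVec y)) : Gamma A)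
      = ⁅(inl (Multiplicative.ofAdd y) : Gamma A), inr (Multiplicative.ofAdd 1)⁆ := by
  have h1 : (inr (Multiplicative.ofAdd (1:ℤ)) : Gamma A) * inl (Multiplicative.ofAdd y)⁻¹ *
      inr (Multiplicative.ofAdd (1:ℤ))⁻¹
      = inl (glPhi A (Multiplicative.ofAdd 1) (Multiplicative.ofAdd y)⁻¹) :=
    (inl_aut _ _).symm
  rw [commutatorElement_def, ← map_inv (inl : _ →* Gamma A), ← map_inv (inr : _ →* Gamma A),
    mul_assoc, mul_assoc, ← mul_assoc (inr (Multiplicative.ofAdd (1:ℤ))), h1, ← _root_.map_mul]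
  congr 1
  show Multiplicative.ofAdd _ = _
  have : glPhi A (Multiplicative.ofAdd 1) (Multiplicative.ofAdd y)⁻¹
      = Multiplicative.ofAdd (-(A : Matrix (Fin n) (Fin n) ℤ).mulVec y) := by
    simp [glPhi, glToAddAut]
    rw [Matrix.mulVec_neg, ofAdd_neg]
  rw [this, ← ofAdd_add]
  congr 1
  simp [Matrix.sub_mulVec, Matrix.one_mulVec, Matrix.add_mulVec, Matrix.neg_mulVec, sub_eq_add_neg]

lemma lattice_char {n : ℕ} (A : Matrix.GeneralLinearGroup (Fin n) ℤ) (hA : IsHyperbolic A)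
    (g : Gamma A) :
    g ∈ (SemidirectProduct.inl : Multiplicative (Fin n → ℤ) →* Gamma A).range ↔
      ∃ k : ℤ, k ≠ 0 ∧ g ^ k ∈ commutator (Gamma A) := by
  constructor
  · rintro ⟨x, rfl⟩
    set M := (1 : Matrix (Fin n) (Fin n) ℤ) - A with hM
    refine ⟨M.det, det_one_sub_ne_zero A hA, ?_⟩
    have h1 : (inl x : Gamma A) ^ M.det
        = inl (Multiplicative.ofAdd (M.det • x.toAdd)) := by
      rw [← map_zpow]
      congr 1
    have h2 : M.det • x.toAdd = M.mulVec (M.adjugate.mulVec x.toAdd) := by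
      rw [Matrix.mulVec_mulVec, Matrix.mul_adjugate, Matrix.smul_mulVec, Matrix.one_mulVec]
    rw [h1, h2, comm_elt]
    exact Subgroup.commutator_mem_commutator (Subgroup.mem_top _) (Subgroup.mem_top _)
  · rintro ⟨k, hk, hgk⟩
    rw [SemidirectProduct.range_inl_eq_ker_rightHom, MonoidHom.mem_ker]
    have h1 : rightHom (g ^ k) = 1 :=
      Abelianization.commutator_subset_ker (rightHom : Gamma A →* Multiplicative ℤ) hgk
    rw [map_zpow] at h1
    have h2 : k • (Multiplicative.toAdd (rightHom g)) = 0 := by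
      have := congrArg Multiplicative.toAdd h1
      simpa using this
    rcases smul_eq_zero.mp h2 with h | h
    · exact absurd h hk
    · exact Multiplicative.toAdd.injective (by simpa using h)

/-- Any isomorphism `ℤⁿ ⋊_A ℤ → ℤⁿ ⋊_B ℤ` between such groups with `A, B` hyperbolic
maps the subgroup `ℤⁿ × {0}` onto `ℤⁿ × {0}`. -/
theorem iso_maps_lattice_to_lattice {n : ℕ} (A B : Matrix.GeneralLinearGroup (Fin n) ℤ)
    (hA : IsHyperbolic A) (hB : IsHyperbolic B) (Φ : Gamma A ≃* Gamma B) :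
    Subgroup.map Φ.toMonoidHom
        (SemidirectProduct.inl : Multiplicative (Fin n → ℤ) →* Gamma A).range =
      (SemidirectProduct.inl : Multiplicative (Fin n → ℤ) →* Gamma B).range := by
  have hcomm : Subgroup.map Φ.toMonoidHom (commutator (Gamma A)) = commutator (Gamma B) := by
    rw [commutator, commutator, Subgroup.map_commutator,
      Subgroup.map_top_of_surjective _ Φ.surjective]
  ext g
  rw [Subgroup.mem_map_equiv, lattice_char A hA, lattice_char B hB]
  constructor
  · rintro ⟨k, hk, hmem⟩
    refine ⟨k, hk, ?_⟩
    rw [← hcomm, Subgroup.mem_map_equiv]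
    simpa using hmem
  · rintro ⟨k, hk, hmem⟩
    refine ⟨k, hk, ?_⟩
    rw [← hcomm, Subgroup.mem_map_equiv] at hmem
    simpa using hmem
end

section
/- Let A, B ∈ GL_n(ℤ) be hyperbolic. Then ℤⁿ ⋊_A ℤ ≅ ℤⁿ ⋊_B ℤ if and only if A is conjugate in GL_n(ℤ) to B or to B⁻¹. -/
namespace GP

open Polynomial

variable {n : ℕ}

/-- `glToAddAut` as a monoid hom into `MulAut`. -/
def psi : Matrix.GeneralLinearGroup (Fin n) ℤ →* MulAut (Multiplicative (Fin n → ℤ)) where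
  toFun A := AddEquiv.toMultiplicative (glToAddAut A)
  map_one' := by ext x; simp [glToAddAut]
  map_mul' A B := by ext x; simp [glToAddAut, Matrix.mulVec_mulVec]

lemma glPhi_apply (A : Matrix.GeneralLinearGroup (Fin n) ℤ) (g : Multiplicative ℤ)
    (x : Multiplicative (Fin n → ℤ)) :
    glPhi A g x = Multiplicative.ofAdd
      (((A ^ g.toAdd : Matrix.GeneralLinearGroup (Fin n) ℤ) :
        Matrix (Fin n) (Fin n) ℤ).mulVec x.toAdd) := by
  have : glPhi A g = psi (A ^ g.toAdd) := by rw [map_zpow]; rfl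
  rw [this]; rfl

/-- conjugation equivalence -/
def conjEquiv (A B C : Matrix.GeneralLinearGroup (Fin n) ℤ) (h : C * A * C⁻¹ = B) :
    Gamma A ≃* Gamma B where
  toFun g := ⟨Multiplicative.ofAdd ((C : Matrix (Fin n) (Fin n) ℤ).mulVec g.left.toAdd), g.right⟩
  invFun g := ⟨Multiplicative.ofAdd
    ((↑(C⁻¹) : Matrix (Fin n) (Fin n) ℤ).mulVec g.left.toAdd), g.right⟩
  left_inv g := by
    ext : 1
    · show ((↑(C⁻¹) : Matrix (Fin n) (Fin n) ℤ).mulVec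
        ((C : Matrix (Fin n) (Fin n) ℤ).mulVec g.left.toAdd)) = g.left.toAdd
      rw [Matrix.mulVec_mulVec, ← Units.val_mul, inv_mul_cancel, Units.val_one, Matrix.one_mulVec]
    · rfl
  right_inv g := by
    ext : 1
    · show ((C : Matrix (Fin n) (Fin n) ℤ).mulVec
        ((↑(C⁻¹) : Matrix (Fin n) (Fin n) ℤ).mulVec g.left.toAdd)) = g.left.toAdd
      rw [Matrix.mulVec_mulVec, ← Units.val_mul, mul_inv_cancel, Units.val_one, Matrix.one_mulVec]
    · rfl
  map_mul' a b := by
    have key : ∀ i : ℤ, (C * A ^ i : Matrix.GeneralLinearGroup (Fin n) ℤ) = B ^ i * C := by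
      intro i
      have h2 : (C * A ^ i * C⁻¹ : Matrix.GeneralLinearGroup (Fin n) ℤ) = B ^ i := by
        rw [← h, conj_zpow]
      rw [← h2]
      group
    ext : 1
    · show (C : Matrix (Fin n) (Fin n) ℤ).mulVec
        (Multiplicative.toAdd (a.left * glPhi A a.right b.left)) =
        Multiplicative.toAdd (Multiplicative.ofAdd
          ((C : Matrix (Fin n) (Fin n) ℤ).mulVec a.left.toAdd) *
          glPhi B a.right (Multiplicative.ofAdd
            ((C : Matrix (Fin n) (Fin n) ℤ).mulVec b.left.toAdd)))
      rw [glPhi_apply, glPhi_apply]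
      simp only [toAdd_mul, toAdd_ofAdd, Matrix.mulVec_add, Matrix.mulVec_mulVec]
      rw [← Units.val_mul, ← Units.val_mul, key]
    · rfl

/-- inversion equivalence -/
def invEquiv (A : Matrix.GeneralLinearGroup (Fin n) ℤ) : Gamma A ≃* Gamma A⁻¹ where
  toFun g := ⟨g.left, g.right⁻¹⟩
  invFun g := ⟨g.left, g.right⁻¹⟩
  left_inv g := by ext <;> simp
  right_inv g := by ext <;> simp
  map_mul' a b := by
    ext : 1
    · show Multiplicative.toAdd (a.left * glPhi A a.right b.left) =
        Multiplicative.toAdd (a.left * glPhi A⁻¹ a.right⁻¹ b.left)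
      rw [glPhi_apply, glPhi_apply]
      have h2 : ((A⁻¹) ^ (Multiplicative.toAdd (a.right⁻¹)) : Matrix.GeneralLinearGroup (Fin n) ℤ)
          = A ^ a.right.toAdd := by
        simp [inv_zpow, zpow_neg]
      rw [h2]
    · show (a.right * b.right)⁻¹ = a.right⁻¹ * b.right⁻¹
      rw [mul_inv, mul_comm]

lemma charpoly_isRoot_iff_spectrum (M : Matrix (Fin n) (Fin n) ℂ) (μ : ℂ) :
    M.charpoly.IsRoot μ ↔ μ ∈ spectrum ℂ M := by
  rw [spectrum.mem_iff]
  have h1 : M.charpoly.eval μ = ((Matrix.charmatrix M).map (Polynomial.eval μ)).det := by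
    exact RingHom.map_det (Polynomial.evalRingHom μ) _
  have h2 : (Matrix.charmatrix M).map (Polynomial.eval μ) = algebraMap ℂ _ μ - M := by
    ext i j
    by_cases h : i = j
    · subst h
      simp [Matrix.charmatrix_apply_eq, Matrix.algebraMap_matrix_apply]
    · simp [Matrix.charmatrix_apply_ne _ _ _ h, Matrix.algebraMap_matrix_apply, h]
  rw [Polynomial.IsRoot, h1, h2, Matrix.isUnit_iff_isUnit_det, isUnit_iff_ne_zero, not_ne_iff]

lemma hyp_core {A : Matrix.GeneralLinearGroup (Fin n) ℤ} (hA : IsHyperbolic A)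
    {m : ℕ} (hm : m ≠ 0) {v : Fin n → ℤ}
    (hv : ((A : Matrix (Fin n) (Fin n) ℤ) ^ m).mulVec v = v) : v = 0 := by
  by_contra hv0
  set M : Matrix (Fin n) (Fin n) ℂ := (A : Matrix (Fin n) (Fin n) ℤ).map (Int.cast : ℤ → ℂ) with hM
  have hker : ∃ w, w ≠ 0 ∧ (((A : Matrix (Fin n) (Fin n) ℤ) ^ m) - 1).mulVec w = 0 :=
    ⟨v, hv0, by rw [Matrix.sub_mulVec, hv, Matrix.one_mulVec, sub_self]⟩
  have hdet : (((A : Matrix (Fin n) (Fin n) ℤ) ^ m) - 1).det = 0 :=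
    Matrix.exists_mulVec_eq_zero_iff.mp hker
  have hmap : ((Int.castRingHom ℂ).mapMatrix (((A : Matrix (Fin n) (Fin n) ℤ) ^ m) - 1))
      = M ^ m - 1 := by
    rw [map_sub, map_pow, map_one]
    rfl
  have hdetC : ((M ^ m) - 1).det = 0 := by
    rw [← hmap, ← RingHom.map_det, hdet, map_zero]
  have h1 : (1 : ℂ) ∈ spectrum ℂ (M ^ m) := by
    rw [spectrum.mem_iff, Matrix.isUnit_iff_isUnit_det, isUnit_iff_ne_zero, not_ne_iff]
    have heq : (algebraMap ℂ (Matrix (Fin n) (Fin n) ℂ)) 1 - M ^ m = -(M ^ m - 1) := by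
      rw [map_one, neg_sub]
    rw [heq, Matrix.det_neg, hdetC, mul_zero]
  rw [spectrum.map_pow_of_pos M (Nat.pos_of_ne_zero hm)] at h1
  obtain ⟨μ, hμ, hpow⟩ := h1
  apply hA μ ((charpoly_isRoot_iff_spectrum M μ).mpr hμ)
  have habs : ‖μ‖ ^ m = 1 := by
    rw [← norm_pow]
    simp only at hpow
    rw [hpow, norm_one]
  have h0 : 0 ≤ ‖μ‖ := norm_nonneg _
  rcases lt_trichotomy (‖μ‖) 1 with h | h | h
  · exact absurd habs (by simpa using (pow_lt_one₀ h0 h hm).ne)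
  · exact h
  · exact absurd habs (by simpa using (one_lt_pow₀ h (by exact hm)).ne')

lemma hyp_fixed {A : Matrix.GeneralLinearGroup (Fin n) ℤ} (hA : IsHyperbolic A)
    {i : ℤ} (hi : i ≠ 0) {v : Fin n → ℤ}
    (hv : ((A ^ i : Matrix.GeneralLinearGroup (Fin n) ℤ) :
      Matrix (Fin n) (Fin n) ℤ).mulVec v = v) : v = 0 := by
  have key : ∀ j : ℤ, 0 < j →
      ((A ^ j : Matrix.GeneralLinearGroup (Fin n) ℤ) :
        Matrix (Fin n) (Fin n) ℤ).mulVec v = v → v = 0 := by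
    intro j hj hvj
    have h1 : (A ^ j : Matrix.GeneralLinearGroup (Fin n) ℤ) = A ^ (j.toNat) := by
      rw [← zpow_natCast, Int.toNat_of_nonneg hj.le]
    rw [h1] at hvj
    have h2 : ((A ^ j.toNat : Matrix.GeneralLinearGroup (Fin n) ℤ) : Matrix (Fin n) (Fin n) ℤ)
        = ((A : Matrix (Fin n) (Fin n) ℤ)) ^ j.toNat := Units.val_pow_eq_pow_val _ _
    rw [h2] at hvj
    exact hyp_core hA (by omega) hvj
  rcases hi.lt_or_gt with h | h
  · apply key (-i) (by omega)
    conv_lhs => rw [show v = ((A ^ i : Matrix.GeneralLinearGroup (Fin n) ℤ) :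
      Matrix (Fin n) (Fin n) ℤ).mulVec v from hv.symm]
    rw [Matrix.mulVec_mulVec, ← Units.val_mul, ← zpow_add, neg_add_cancel, zpow_zero,
      Units.val_one, Matrix.one_mulVec]
  · exact key i h hv

end GP

namespace GP
variable {n : ℕ}

lemma commute_of_right_eq_one {A : Matrix.GeneralLinearGroup (Fin n) ℤ} {a b : Gamma A}
    (ha : a.right = 1) (hb : b.right = 1) : a * b = b * a := by
  ext : 1
  · show a.left * glPhi A a.right b.left = b.left * glPhi A b.right a.left
    rw [ha, hb, map_one, MulAut.one_apply, MulAut.one_apply, mul_comm]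
  · show a.right * b.right = b.right * a.right
    rw [ha, hb]

lemma exists_not_commute {A : Matrix.GeneralLinearGroup (Fin n) ℤ} (hA : IsHyperbolic A)
    (hn : n ≠ 0) {g : Gamma A} (hg : g.right ≠ 1) :
    ∃ h : Gamma A, g * (h * g * h⁻¹) ≠ (h * g * h⁻¹) * g := by
  set i := g.right.toAdd with hidef
  have hi : i ≠ 0 := by
    intro h0
    exact hg (by rw [show g.right = Multiplicative.ofAdd i from rfl, h0]; rfl)
  set P : Matrix (Fin n) (Fin n) ℤ :=
    ((A ^ i : Matrix.GeneralLinearGroup (Fin n) ℤ) : Matrix (Fin n) (Fin n) ℤ) with hP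
  have hy : ∃ y : Fin n → ℤ, P.mulVec y ≠ y := by
    by_contra hc
    push_neg at hc
    have one_ne : (fun _ => (1 : ℤ) : Fin n → ℤ) ≠ 0 := by
      intro h0
      have := congrFun h0 ⟨0, Nat.pos_of_ne_zero hn⟩
      simpa using this
    exact one_ne (GP.hyp_fixed hA hi (hc _))
  obtain ⟨y, hy⟩ := hy
  refine ⟨⟨Multiplicative.ofAdd y, 1⟩, fun hcomm => ?_⟩
  have hleft := congrArg (fun z : Gamma A => Multiplicative.toAdd z.left) hcomm
  simp only [SemidirectProduct.mul_left, SemidirectProduct.mul_right,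
    SemidirectProduct.inv_left, SemidirectProduct.inv_right, GP.glPhi_apply,
    toAdd_mul, toAdd_ofAdd, toAdd_inv, map_one, mul_one, one_mul, inv_one,
    MulAut.one_apply] at hleft
  rw [← hidef] at hleft
  rw [← hP] at hleft
  have hz : P.mulVec (P.mulVec y - y) = P.mulVec y - y := by
    funext j
    have h := congrFun hleft j
    simp only [Matrix.mulVec_add, Matrix.mulVec_neg, Matrix.mulVec_sub, Matrix.mulVec_mulVec,
      Pi.add_apply, Pi.neg_apply, Pi.sub_apply] at h ⊢
    omega
  have h0 := GP.hyp_fixed hA hi (v := P.mulVec y - y) (by rw [← hP]; exact hz)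
  exact sub_ne_zero.mpr hy h0

lemma right_eq_one_iff {A : Matrix.GeneralLinearGroup (Fin n) ℤ} (hA : IsHyperbolic A)
    (hn : n ≠ 0) (g : Gamma A) :
    (∀ h : Gamma A, g * (h * g * h⁻¹) = (h * g * h⁻¹) * g) ↔ g.right = 1 := by
  constructor
  · intro hc
    by_contra hg
    obtain ⟨h, hh⟩ := exists_not_commute hA hn hg
    exact hh (hc h)
  · intro hg h
    have hr : (h * g * h⁻¹).right = 1 := by
      simp [hg]
    exact commute_of_right_eq_one hg hr

theorem forward {A B : Matrix.GeneralLinearGroup (Fin n) ℤ}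
    (hA : IsHyperbolic A) (hB : IsHyperbolic B) (hn : n ≠ 0) (φ : Gamma A ≃* Gamma B) :
    ∃ C : Matrix.GeneralLinearGroup (Fin n) ℤ, C * A * C⁻¹ = B ∨ C * A * C⁻¹ = B⁻¹ := by
  classical
  -- Step 1 : φ preserves the subgroup ℤⁿ
  have key : ∀ g : Gamma A, (∀ h, g * (h * g * h⁻¹) = (h * g * h⁻¹) * g) →
      (∀ h', (φ g) * (h' * (φ g) * h'⁻¹) = (h' * (φ g) * h'⁻¹) * (φ g)) := by
    intro g hg h'
    have h1 := congrArg φ (hg (φ.symm h'))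
    simpa only [map_mul, map_inv, MulEquiv.apply_symm_apply] using h1
  have key' : ∀ g : Gamma B, (∀ h, g * (h * g * h⁻¹) = (h * g * h⁻¹) * g) →
      (∀ h', (φ.symm g) * (h' * (φ.symm g) * h'⁻¹) = (h' * (φ.symm g) * h'⁻¹) * (φ.symm g)) := by
    intro g hg h'
    have h1 := congrArg φ.symm (hg (φ h'))
    simpa only [map_mul, map_inv, MulEquiv.symm_apply_apply] using h1
  have hK : ∀ g : Gamma A, (φ g).right = 1 ↔ g.right = 1 := by
    intro g
    rw [← right_eq_one_iff hA hn g, ← right_eq_one_iff hB hn (φ g)]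
    constructor
    · intro hc
      have h2 := key' (φ g) hc
      simpa only [MulEquiv.symm_apply_apply] using h2
    · exact key g
  have hK' : ∀ g : Gamma B, (φ.symm g).right = 1 ↔ g.right = 1 := by
    intro g
    have h2 := hK (φ.symm g)
    rw [MulEquiv.apply_symm_apply] at h2
    exact h2.symm
  -- Step 2 : the induced automorphism of ℤⁿ
  set cf : (Fin n → ℤ) → (Fin n → ℤ) :=
    fun x => Multiplicative.toAdd ((φ (SemidirectProduct.inl (Multiplicative.ofAdd x))).left)
    with hcf
  set cf' : (Fin n → ℤ) → (Fin n → ℤ) :=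
    fun x => Multiplicative.toAdd ((φ.symm (SemidirectProduct.inl (Multiplicative.ofAdd x))).left)
    with hcf'
  have hφinl : ∀ z : Fin n → ℤ,
      φ (SemidirectProduct.inl (Multiplicative.ofAdd z))
        = SemidirectProduct.inl (Multiplicative.ofAdd (cf z)) :=
    fun z => by
      have h2 : (φ (SemidirectProduct.inl (Multiplicative.ofAdd z))).right = 1 := (hK _).mpr rfl
      exact SemidirectProduct.ext rfl h2
  have hφinl' : ∀ z : Fin n → ℤ,
      φ.symm (SemidirectProduct.inl (Multiplicative.ofAdd z))
        = SemidirectProduct.inl (Multiplicative.ofAdd (cf' z)) :=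
    fun z => by
      have h2 : (φ.symm (SemidirectProduct.inl (Multiplicative.ofAdd z))).right = 1 :=
        (hK' _).mpr rfl
      exact SemidirectProduct.ext rfl h2
  have cf_add : ∀ x y : Fin n → ℤ, cf (x + y) = cf x + cf y := by
    intro x y
    have h0 : (SemidirectProduct.inl (Multiplicative.ofAdd (x + y)) : Gamma A)
        = SemidirectProduct.inl (Multiplicative.ofAdd x)
          * SemidirectProduct.inl (Multiplicative.ofAdd y) := by
      rw [← map_mul]
      rfl
    have h1 : φ (SemidirectProduct.inl (Multiplicative.ofAdd (x + y)))
        = SemidirectProduct.inl (Multiplicative.ofAdd (cf x + cf y)) := by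
      rw [h0, map_mul, hφinl, hφinl, ← map_mul]
      rfl
    have h2 := congrArg (fun z : Gamma B => Multiplicative.toAdd z.left)
      ((hφinl (x + y)).symm.trans h1)
    simpa using h2
  have cf'_cf : ∀ x : Fin n → ℤ, cf' (cf x) = x := by
    intro x
    have h1 := congrArg φ.symm (hφinl x)
    rw [MulEquiv.symm_apply_apply, hφinl'] at h1
    have h2 := congrArg (fun z : Gamma A => Multiplicative.toAdd z.left) h1
    simpa using h2.symm
  have cf_cf' : ∀ x : Fin n → ℤ, cf (cf' x) = x := by
    intro x
    have h1 := congrArg φ (hφinl' x)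
    rw [MulEquiv.apply_symm_apply, hφinl] at h1
    have h2 := congrArg (fun z : Gamma B => Multiplicative.toAdd z.left) h1
    simpa using h2.symm
  -- matrices
  set ch : (Fin n → ℤ) →ₗ[ℤ] (Fin n → ℤ) := (AddMonoidHom.mk' cf cf_add).toIntLinearMap with hch
  set ch' : (Fin n → ℤ) →ₗ[ℤ] (Fin n → ℤ) :=
    (AddMonoidHom.mk' cf' (fun x y => by
      have := cf_add (cf' x) (cf' y)
      rw [cf_cf', cf_cf'] at this
      rw [← this, cf'_cf])).toIntLinearMap with hch'
  set Mc : Matrix (Fin n) (Fin n) ℤ := LinearMap.toMatrix' ch with hMc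
  set Mc' : Matrix (Fin n) (Fin n) ℤ := LinearMap.toMatrix' ch' with hMc'
  have hMcVec : ∀ x : Fin n → ℤ, Mc.mulVec x = cf x := by
    intro x
    rw [hMc, ← Matrix.toLin'_apply, Matrix.toLin'_toMatrix']
    rfl
  have hMM' : Mc * Mc' = 1 := by
    rw [hMc, hMc', ← LinearMap.toMatrix'_comp, ← LinearMap.toMatrix'_id (R := ℤ) (n := Fin n)]
    congr 1
    apply LinearMap.ext
    intro x
    exact cf_cf' x
  have hM'M : Mc' * Mc = 1 := by
    rw [hMc, hMc', ← LinearMap.toMatrix'_comp, ← LinearMap.toMatrix'_id (R := ℤ) (n := Fin n)]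
    congr 1
    apply LinearMap.ext
    intro x
    exact cf'_cf x
  set C : Matrix.GeneralLinearGroup (Fin n) ℤ := ⟨Mc, Mc', hMM', hM'M⟩ with hC
  -- Step 3 : the induced automorphism of ℤ
  set ψ : Multiplicative ℤ →* Multiplicative ℤ :=
    SemidirectProduct.rightHom.comp (φ.toMonoidHom.comp SemidirectProduct.inr) with hψ
  set ψ' : Multiplicative ℤ →* Multiplicative ℤ :=
    SemidirectProduct.rightHom.comp (φ.symm.toMonoidHom.comp SemidirectProduct.inr) with hψ'
  have hψψ' : ∀ t, ψ (ψ' t) = t := by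
    intro t
    show SemidirectProduct.rightHom (φ (SemidirectProduct.inr
      (SemidirectProduct.rightHom (φ.symm (SemidirectProduct.inr t))))) = t
    set g : Gamma A := φ.symm (SemidirectProduct.inr t) with hg
    have hdecomp : (SemidirectProduct.inr (SemidirectProduct.rightHom g) : Gamma A)
        = (SemidirectProduct.inl g.left)⁻¹ * g := by
      rw [SemidirectProduct.rightHom_eq_right, eq_inv_mul_iff_mul_eq]
      exact SemidirectProduct.inl_left_mul_inr_right g
    rw [hdecomp, map_mul, map_inv, map_mul, map_inv]
    rw [hg, MulEquiv.apply_symm_apply]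
    have hr1 : SemidirectProduct.rightHom (φ (SemidirectProduct.inl g.left)) = 1 := by
      rw [SemidirectProduct.rightHom_eq_right]
      exact (hK _).mpr rfl
    rw [hr1, SemidirectProduct.rightHom_inr, inv_one, one_mul]
  set ε : ℤ := Multiplicative.toAdd (ψ (Multiplicative.ofAdd 1)) with hε
  set ε' : ℤ := Multiplicative.toAdd (ψ' (Multiplicative.ofAdd 1)) with hε'
  have hmulεε' : ε' * ε = 1 := by
    have h1 := hψψ' (Multiplicative.ofAdd 1)
    have h2 : ψ' (Multiplicative.ofAdd 1) = (Multiplicative.ofAdd (1 : ℤ)) ^ ε' := by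
      rw [← ofAdd_zsmul, smul_eq_mul, mul_one, hε']
      rfl
    rw [h2, map_zpow] at h1
    have h3 : (ψ (Multiplicative.ofAdd 1)) = Multiplicative.ofAdd ε := by rw [hε]; rfl
    rw [h3, ← ofAdd_zsmul, smul_eq_mul] at h1
    exact Multiplicative.ofAdd.injective h1
  have hεval : ε = 1 ∨ ε = -1 :=
    Int.isUnit_iff.mp (IsUnit.of_mul_eq_one (a := ε) ε' (by linarith [hmulεε']))
  -- Step 4 : conjugation relation
  have hconj : ∀ y : Fin n → ℤ,
      cf ((A : Matrix (Fin n) (Fin n) ℤ).mulVec y)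
        = ((B ^ ε : Matrix.GeneralLinearGroup (Fin n) ℤ) :
            Matrix (Fin n) (Fin n) ℤ).mulVec (cf y) := by
    intro y
    have h1 := SemidirectProduct.inl_aut (φ := glPhi A) (Multiplicative.ofAdd (1 : ℤ))
      (Multiplicative.ofAdd y)
    have hval : glPhi A (Multiplicative.ofAdd (1 : ℤ)) (Multiplicative.ofAdd y)
        = Multiplicative.ofAdd ((A : Matrix (Fin n) (Fin n) ℤ).mulVec y) := by
      rw [GP.glPhi_apply]
      simp [zpow_one]
    rw [hval] at h1
    rw [show SemidirectProduct.inr ((Multiplicative.ofAdd (1 : ℤ))⁻¹)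
        = (SemidirectProduct.inr (φ := glPhi A) (Multiplicative.ofAdd (1 : ℤ)))⁻¹
      from map_inv _ _] at h1
    have h2 := congrArg φ h1
    rw [map_mul, map_mul, map_inv, hφinl, hφinl] at h2
    set v : Multiplicative (Fin n → ℤ) :=
      (φ (SemidirectProduct.inr (Multiplicative.ofAdd (1 : ℤ)))).left with hv
    have hφinr : φ (SemidirectProduct.inr (Multiplicative.ofAdd (1 : ℤ)))
        = SemidirectProduct.inl v * SemidirectProduct.inr (Multiplicative.ofAdd ε) := by
      conv_lhs => rw [← SemidirectProduct.inl_left_mul_inr_right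
        (φ (SemidirectProduct.inr (Multiplicative.ofAdd (1 : ℤ))))]
      rw [← hv, hε]
      rfl
    rw [hφinr, mul_inv_rev] at h2
    have h3 : SemidirectProduct.inl (φ := glPhi B) v
          * SemidirectProduct.inr (Multiplicative.ofAdd ε)
          * SemidirectProduct.inl (Multiplicative.ofAdd (cf y))
          * ((SemidirectProduct.inr (Multiplicative.ofAdd ε))⁻¹
            * (SemidirectProduct.inl v)⁻¹)
        = SemidirectProduct.inl
            (v * glPhi B (Multiplicative.ofAdd ε) (Multiplicative.ofAdd (cf y)) * v⁻¹) := by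
      rw [map_mul, map_mul, map_inv, SemidirectProduct.inl_aut]
      group
      rw [map_zpow]
    rw [h3] at h2
    have h4 : v * glPhi B (Multiplicative.ofAdd ε) (Multiplicative.ofAdd (cf y)) * v⁻¹
        = glPhi B (Multiplicative.ofAdd ε) (Multiplicative.ofAdd (cf y)) := by
      rw [mul_comm v, mul_assoc, mul_inv_cancel, mul_one]
    rw [h4] at h2
    have h5 := SemidirectProduct.inl_injective h2
    rw [GP.glPhi_apply] at h5
    have h6 := congrArg Multiplicative.toAdd h5
    simpa using h6
  have hMcA : Mc * (A : Matrix (Fin n) (Fin n) ℤ)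
      = ((B ^ ε : Matrix.GeneralLinearGroup (Fin n) ℤ) : Matrix (Fin n) (Fin n) ℤ) * Mc := by
    apply Matrix.toLin'.injective
    apply LinearMap.ext
    intro y
    rw [Matrix.toLin'_apply, Matrix.toLin'_apply, ← Matrix.mulVec_mulVec, ← Matrix.mulVec_mulVec,
      hMcVec, hMcVec]
    exact hconj y
  have hCA : C * A = B ^ ε * C := by
    apply Units.ext
    rw [Units.val_mul, Units.val_mul]
    exact hMcA
  have hCAC : C * A * C⁻¹ = B ^ ε := by
    rw [hCA, mul_inv_cancel_right]
  rcases hεval with h | h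
  · exact ⟨C, Or.inl (by rw [hCAC, h, zpow_one])⟩
  · exact ⟨C, Or.inr (by rw [hCAC, h, zpow_neg, zpow_one])⟩

end GP

/-- For hyperbolic `A, B ∈ GL_n(ℤ)`: `ℤⁿ ⋊_A ℤ ≅ ℤⁿ ⋊_B ℤ` iff `A` is conjugate in
`GL_n(ℤ)` to `B` or to `B⁻¹`. -/
theorem gamma_iso_iff_conj {n : ℕ} (A B : Matrix.GeneralLinearGroup (Fin n) ℤ)
    (hA : IsHyperbolic A) (hB : IsHyperbolic B) :
    Nonempty (Gamma A ≃* Gamma B) ↔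
      ∃ C : Matrix.GeneralLinearGroup (Fin n) ℤ, C * A * C⁻¹ = B ∨ C * A * C⁻¹ = B⁻¹ := by
  constructor
  · rintro ⟨φ⟩
    rcases Nat.eq_zero_or_pos n with hn | hn
    · refine ⟨1, Or.inl (Units.ext (Matrix.ext fun i _ => ?_))⟩
      exact absurd i.isLt (by omega)
    · exact GP.forward hA hB (by omega) φ
  · rintro ⟨C, h | h⟩
    · exact ⟨GP.conjEquiv A B C h⟩
    · refine ⟨(GP.conjEquiv A B⁻¹ C h).trans ?_⟩
      have := GP.invEquiv B⁻¹
      rwa [inv_inv] at this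
end

section
/- Every free ℤ[ℤ/2ℤ]-module of finite rank whose underlying abelian group is free abelian decomposes as a direct sum of copies of the trivial module ℤ, the sign module ℤ₋ (where the generator acts by -1), and the regular module ℤ[ℤ/2ℤ]. -/
namespace InvDecomp

variable {A B : Type*} [AddCommGroup A] [AddCommGroup B]

/-- Reindexing a pi type by an equivalence of index types. -/
def arrCongr {α β : Type*} (σ : α ≃ β) : (α → A) ≃+ (β → A) where
  toFun x := x ∘ σ.symm
  invFun x := x ∘ σ
  left_inv x := by ext i; simp
  right_inv x := by ext i; simp
  map_add' x y := rfl

def arrSum {α β : Type*} : ((α ⊕ β) → A) ≃+ (α → A) × (β → A) where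
  toFun x := (x ∘ Sum.inl, x ∘ Sum.inr)
  invFun x := Sum.elim x.1 x.2
  left_inv x := by ext (i | i) <;> rfl
  right_inv x := rfl
  map_add' x y := rfl

/-- A conjugation step lemma for composing equivalences. -/
theorem step {M A B : Type*} [AddCommGroup M] [AddCommGroup A] [AddCommGroup B]
    (τ : M → M) (e₁ : M ≃+ A) (e₂ : A ≃+ B) (F : A → A) (G : B → B)
    (h₁ : ∀ x, e₁ (τ x) = F (e₁ x)) (h₂ : ∀ y, e₂ (F y) = G (e₂ y)) :
    ∀ x, (e₁.trans e₂) (τ x) = G ((e₁.trans e₂) x) := fun x => by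
  simp only [AddEquiv.trans_apply, h₁, h₂]

def oddEquiv (k : ℤ) : ℤ × ℤ ≃+ ℤ × ℤ where
  toFun x := (x.1 - k * x.2, (k + 1) * x.2 - x.1)
  invFun y := ((k + 1) * y.1 + k * y.2, y.1 + y.2)
  left_inv x := by obtain ⟨p, q⟩ := x; apply Prod.ext <;> simp <;> ring
  right_inv y := by obtain ⟨u, v⟩ := y; apply Prod.ext <;> simp <;> ring
  map_add' x y := by apply Prod.ext <;> simp <;> ring

theorem oddEquiv_conj (k p q : ℤ) :
    oddEquiv k ((2 * k + 1) * q - p, q) = (oddEquiv k (p, q)).swap := by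
  apply Prod.ext <;> simp [oddEquiv, Prod.swap] <;> ring

def evenEquiv (k : ℤ) : ℤ × ℤ ≃+ ℤ × ℤ where
  toFun x := (x.2, x.1 - k * x.2)
  invFun y := (y.2 + k * y.1, y.1)
  left_inv x := by obtain ⟨p, q⟩ := x; apply Prod.ext <;> simp
  right_inv y := by obtain ⟨u, v⟩ := y; apply Prod.ext <;> simp
  map_add' x y := by apply Prod.ext <;> simp <;> ring

theorem evenEquiv_conj (k p q : ℤ) :
    evenEquiv k ((k + k) * q - p, q) = ((evenEquiv k (p, q)).1, -(evenEquiv k (p, q)).2) := by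
  apply Prod.ext <;> simp [evenEquiv] <;> ring

def regroup {α β γ : Type*} :
    (((α → ℤ) × (β → ℤ)) × ((γ → ℤ) × (α → ℤ))) ≃+ ((α → ℤ × ℤ) × (γ → ℤ) × (β → ℤ)) where
  toFun x := (fun i => (x.1.1 i, x.2.2 i), x.2.1, x.1.2)
  invFun y := ((fun i => (y.1 i).1, y.2.2), (y.2.1, fun i => (y.1 i).2))
  left_inv x := rfl
  right_inv y := rfl
  map_add' x y := rfl

def finalRegroup {α β γ δ : Type*} :
    ((α → ℤ × ℤ) × (δ → ℤ × ℤ)) × (γ → ℤ) × (β → ℤ) ≃+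
      (α → ℤ × ℤ) × ((γ ⊕ δ) → ℤ) × ((β ⊕ δ) → ℤ) where
  toFun x := (x.1.1, Sum.elim x.2.1 (fun e => (x.1.2 e).1), Sum.elim x.2.2 (fun e => (x.1.2 e).2))
  invFun y := ((y.1, fun e => (y.2.1 (Sum.inr e), y.2.2 (Sum.inr e))),
    (y.2.1 ∘ Sum.inl, y.2.2 ∘ Sum.inl))
  left_inv x := by
    obtain ⟨⟨a, d⟩, g, b⟩ := x
    refine Prod.ext (Prod.ext rfl ?_) rfl
    ext e <;> rfl
  right_inv y := by
    obtain ⟨a, g, b⟩ := y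
    refine Prod.ext rfl (Prod.ext ?_ ?_) <;> ext (i | i) <;> rfl
  map_add' x y := by
    refine Prod.ext rfl (Prod.ext ?_ ?_) <;> ext (i | i) <;> rfl

/-- Splitting a module along a retraction. -/
def splitEquiv {X Y : Type*} [AddCommGroup X] [Module ℤ X] [AddCommGroup Y] [Module ℤ Y]
    (f : X →ₗ[ℤ] Y) (P : Submodule ℤ X) (hP : ∀ x, x ∈ P ↔ f x = 0)
    (s : Y →ₗ[ℤ] X) (hs : ∀ y, f (s y) = y) : X ≃+ P × Y where
  toFun x := (⟨x - s (f x), (hP _).mpr (by simp [map_sub, hs])⟩, f x)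
  invFun y := (y.1 : X) + s y.2
  left_inv x := by simp
  right_inv y := by
    obtain ⟨p, q⟩ := y
    have h0 : f (p : X) = 0 := (hP _).mp p.2
    refine Prod.ext (Subtype.ext ?_) ?_ <;> simp [h0, hs, map_add]
  map_add' x y := by
    refine Prod.ext (Subtype.ext ?_) (map_add f x y)
    show x + y - s (f (x + y)) = (x - s (f x)) + (y - s (f y))
    rw [map_add, map_add]
    abel

end InvDecomp

open InvDecomp

set_option maxHeartbeats 1000000 in
/-- Every finite-rank free abelian group with an involution (i.e. every
`ℤ[ℤ/2ℤ]`-module that is free as an abelian group) decomposes as a direct sum of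
copies of the regular module `ℤ[ℤ/2ℤ]` (coordinates swapped), the trivial module `ℤ`,
and the sign module `ℤ₋` (involution acting by `-1`). -/
theorem involution_module_decomposition (M : Type*) [AddCommGroup M]
    [Module.Free ℤ M] [Module.Finite ℤ M] (τ : M ≃+ M) (hτ : ∀ x, τ (τ x) = x) :
    ∃ (a b c : ℕ) (e : M ≃+ (Fin a → ℤ × ℤ) × (Fin b → ℤ) × (Fin c → ℤ)),
      ∀ x : M, e (τ x) =
        (fun i => ((e x).1 i).swap, (e x).2.1, fun i => -((e x).2.2 i)) := by
  classical
  haveI : NoZeroSMulDivisors ℤ M := ⟨fun h => smul_eq_zero.mp h⟩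
  haveI : IsNoetherian ℤ M := isNoetherian_of_isNoetherianRing_of_finite ℤ M
  set T : M →ₗ[ℤ] M := τ.toAddMonoidHom.toIntLinearMap with hT
  have hTapp : ∀ x, T x = τ x := fun _ => rfl
  set P : Submodule ℤ M := LinearMap.ker (T + LinearMap.id) with hPdef
  have memP : ∀ x, x ∈ P ↔ τ x + x = 0 := fun x => by
    simp [hPdef, LinearMap.mem_ker, LinearMap.add_apply, hTapp]
  haveI : Module.Finite ℤ P := Module.Finite.iff_fg.mpr (IsNoetherian.noetherian P)
  -- the quotient
  set Q : Type _ := M ⧸ P with hQdef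
  haveI : NoZeroSMulDivisors ℤ Q := by
    refine ⟨fun {c x} h => ?_⟩
    rcases eq_or_ne c 0 with rfl | hc
    · exact Or.inl rfl
    right
    obtain ⟨y, rfl⟩ := Submodule.mkQ_surjective P x
    rw [← map_smul, Submodule.mkQ_apply, Submodule.Quotient.mk_eq_zero] at h
    rw [Submodule.mkQ_apply, Submodule.Quotient.mk_eq_zero]
    rw [memP] at h ⊢
    have : c • (τ y + y) = 0 := by
      rw [smul_add, ← h, map_zsmul]
    rcases smul_eq_zero.mp this with h' | h'
    · exact absurd h' hc
    · exact h'
  -- a section of the quotient map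
  obtain ⟨s, hs⟩ := Module.projective_lifting_property P.mkQ (LinearMap.id (M := Q))
    (Submodule.mkQ_surjective P)
  have hs' : ∀ q : Q, P.mkQ (s q) = q := fun q => by
    have := LinearMap.congr_fun hs q; simpa using this
  have memP' : ∀ x, x ∈ P ↔ P.mkQ x = 0 := fun x => by
    rw [Submodule.mkQ_apply, Submodule.Quotient.mk_eq_zero]
  -- the map φ
  have hφmem : ∀ q : Q, τ (s q) - s q ∈ P := fun q => by
    rw [memP]
    rw [map_sub, hτ]
    abel
  set φ : Q →ₗ[ℤ] P :=
    LinearMap.codRestrict P (T.comp s - s) (fun q => by simpa [hTapp] using hφmem q) with hφdef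
  have hφapp : ∀ q : Q, (φ q : M) = τ (s q) - s q := fun q => rfl
  -- step 1 : M ≃+ P × Q
  set E1 : M ≃+ P × Q := splitEquiv P.mkQ P memP' s hs' with hE1
  have hPneg : ∀ p : M, p ∈ P → τ p = -p := fun p hp => by
    have := (memP p).mp hp
    linear_combination (norm := abel) this
  have hτP : ∀ x, τ x - x ∈ P := fun x => by
    rw [memP, map_sub, hτ]
    abel
  have hπτ : ∀ x, P.mkQ (τ x) = P.mkQ x := fun x => by
    rw [← sub_eq_zero, ← map_sub, ← memP']
    exact hτP x
  have H1 : ∀ x, E1 (τ x) = (fun y => (φ y.2 - y.1, y.2)) (E1 x) := by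
    intro x
    refine Prod.ext (Subtype.ext ?_) (hπτ x)
    have hmem : x - s (P.mkQ x) ∈ P := by
      rw [memP']
      simp [map_sub, hs']
    have hneg := hPneg _ hmem
    rw [map_sub] at hneg
    show τ x - s (P.mkQ (τ x)) = ((φ (P.mkQ x) - ⟨x - s (P.mkQ x), _⟩ : P) : M)
    rw [hπτ x]
    push_cast
    rw [hφapp]
    linear_combination (norm := abel) hneg
  -- step 2 : split Q along φ
  set N : Submodule ℤ P := LinearMap.range φ with hNdef
  set K : Submodule ℤ Q := LinearMap.ker φ with hKdef
  haveI : Module.Finite ℤ Q := inferInstance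
  haveI : IsNoetherian ℤ Q := isNoetherian_of_isNoetherianRing_of_finite ℤ Q
  haveI : Module.Finite ℤ K := Module.Finite.iff_fg.mpr (IsNoetherian.noetherian K)
  -- Smith normal form for N inside P
  set bP : Module.Basis (Module.Free.ChooseBasisIndex ℤ P) ℤ P := Module.Free.chooseBasis ℤ P with hbP
  obtain ⟨r, snf⟩ := Submodule.smithNormalForm bP N
  haveI : Module.Free ℤ N := Module.Free.of_basis snf.bN
  obtain ⟨t, ht⟩ := Module.projective_lifting_property φ.rangeRestrict
    (LinearMap.id (M := N)) (LinearMap.surjective_rangeRestrict φ)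
  have ht' : ∀ n : N, φ.rangeRestrict (t n) = n := fun n => by
    have := LinearMap.congr_fun ht n; exact this
  have memK : ∀ q : Q, q ∈ K ↔ φ.rangeRestrict q = 0 := fun q => by
    rw [hKdef, LinearMap.mem_ker]
    constructor
    · intro h; ext; simpa using h
    · intro h; simpa using congrArg (Subtype.val) h
  set E2 : Q ≃+ K × N := splitEquiv φ.rangeRestrict K memK t ht' with hE2
  set e2 : P × Q ≃+ P × (K × N) := AddEquiv.prodCongr (AddEquiv.refl P) E2 with he2
  have H2' : ∀ y : P × Q, e2 ((fun y : P × Q => (φ y.2 - y.1, y.2)) y) =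
      (fun z : P × (K × N) => ((z.2.2 : P) - z.1, z.2)) (e2 y) := fun y => rfl
  -- coordinates
  set ι := Module.Free.ChooseBasisIndex ℤ P with hι
  set pR : ι → Prop := fun j => j ∈ Set.range ⇑snf.f with hpR
  set ιC := {j : ι // ¬ pR j} with hιC
  set σι : ι ≃ (Fin r) ⊕ ιC :=
    (Equiv.sumCompl pR).symm.trans
      (Equiv.sumCongr (Equiv.ofInjective _ snf.f.injective).symm (Equiv.refl ιC)) with hσι
  set ePsplit : P ≃+ (Fin r → ℤ) × (ιC → ℤ) :=
    snf.bM.equivFun.toAddEquiv.trans ((arrCongr σι).trans arrSum) with hePsplit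
  have hcoord : ∀ n : N, ePsplit (n : P) =
      (fun i => snf.a i * snf.bN.equivFun n i, fun _ => 0) := by
    intro n
    refine Prod.ext (funext fun i => ?_) (funext fun j => ?_)
    · show snf.bM.equivFun (n : P) (σι.symm (Sum.inl i)) = _
      have hsymm : σι.symm (Sum.inl i) = snf.f i := by
        simp only [hσι, Equiv.symm_trans_apply, Equiv.sumCongr_symm, Equiv.sumCongr_apply,
          Equiv.symm_symm, Equiv.refl_symm, Sum.map_inl, Equiv.sumCompl_apply_inl]
        rfl
      rw [hsymm]
      show snf.bM.repr (n : P) (snf.f i) = _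
      rw [snf.repr_apply_embedding_eq_repr_smul]
      rw [map_smul]
      simp [Module.Basis.equivFun_apply, mul_comm]
    · show snf.bM.equivFun (n : P) (σι.symm (Sum.inr j)) = _
      have hsymm : σι.symm (Sum.inr j) = (j : ι) := by
        simp only [hσι, Equiv.symm_trans_apply, Equiv.sumCongr_symm, Equiv.sumCongr_apply,
          Equiv.symm_symm, Equiv.refl_symm, Sum.map_inr, Equiv.refl_apply,
          Equiv.sumCompl_apply_inr]
        rfl
      rw [hsymm]
      exact snf.repr_eq_zero_of_notMem_range n j.2
  haveI : Module.Finite ℤ K := inferInstance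
  set κ := Module.Free.ChooseBasisIndex ℤ K with hκ
  set eK : K ≃+ (κ → ℤ) := (Module.Free.chooseBasis ℤ K).equivFun.toAddEquiv with heK
  set eN : N ≃+ (Fin r → ℤ) := snf.bN.equivFun.toAddEquiv with heN
  set e3 : P × (K × N) ≃+ ((Fin r → ℤ) × (ιC → ℤ)) × ((κ → ℤ) × (Fin r → ℤ)) :=
    AddEquiv.prodCongr ePsplit (AddEquiv.prodCongr eK eN) with he3
  have H3' : ∀ z : P × (K × N),
      e3 ((fun z : P × (K × N) => ((z.2.2 : P) - z.1, z.2)) z) =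
      (fun w : ((Fin r → ℤ) × (ιC → ℤ)) × ((κ → ℤ) × (Fin r → ℤ)) =>
        ((fun i => snf.a i * w.2.2 i - w.1.1 i, fun j => -(w.1.2 j)), w.2)) (e3 z) := by
    intro z
    obtain ⟨p, k, n⟩ := z
    refine Prod.ext ?_ rfl
    show ePsplit ((n : P) - p) = _
    rw [map_sub, hcoord]
    refine Prod.ext (funext fun i => ?_) (funext fun j => ?_)
    · show snf.a i * snf.bN.equivFun n i - (ePsplit p).1 i = _
      rfl
    · show (0 : ℤ) - (ePsplit p).2 j = _
      rw [zero_sub]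
      rfl
  -- step 4: regroup
  set e4 := (regroup (α := Fin r) (β := ιC) (γ := κ)) with he4
  have H4' : ∀ w : ((Fin r → ℤ) × (ιC → ℤ)) × ((κ → ℤ) × (Fin r → ℤ)),
      e4 (((fun i => snf.a i * w.2.2 i - w.1.1 i, fun j => -(w.1.2 j)), w.2)) =
      (fun v : (Fin r → ℤ × ℤ) × (κ → ℤ) × (ιC → ℤ) =>
        ((fun i => (snf.a i * (v.1 i).2 - (v.1 i).1, (v.1 i).2)), v.2.1,
          fun j => -(v.2.2 j))) (e4 w) := fun w => rfl
  -- step 5: parity split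
  set pO : Fin r → Prop := fun i => Odd (snf.a i) with hpO
  set O := {i : Fin r // pO i} with hO
  set Ety := {i : Fin r // ¬ pO i} with hEty
  set σpar : Fin r ≃ O ⊕ Ety := (Equiv.sumCompl pO).symm with hσpar
  set e5 : (Fin r → ℤ × ℤ) × (κ → ℤ) × (ιC → ℤ) ≃+
      ((O → ℤ × ℤ) × (Ety → ℤ × ℤ)) × (κ → ℤ) × (ιC → ℤ) :=
    AddEquiv.prodCongr ((arrCongr σpar).trans arrSum) (AddEquiv.refl _) with he5
  have H5' : ∀ v : (Fin r → ℤ × ℤ) × (κ → ℤ) × (ιC → ℤ),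
      e5 ((fun i => (snf.a i * (v.1 i).2 - (v.1 i).1, (v.1 i).2)), v.2.1,
          fun j => -(v.2.2 j)) =
      (fun u : ((O → ℤ × ℤ) × (Ety → ℤ × ℤ)) × (κ → ℤ) × (ιC → ℤ) =>
        ((fun o => (snf.a o.1 * (u.1.1 o).2 - (u.1.1 o).1, (u.1.1 o).2),
          fun e => (snf.a e.1 * (u.1.2 e).2 - (u.1.2 e).1, (u.1.2 e).2)),
          u.2.1, fun j => -(u.2.2 j))) (e5 v) := by
    intro v
    refine Prod.ext (Prod.ext (funext fun o => ?_) (funext fun e => ?_)) rfl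
    · show (fun i => (snf.a i * (v.1 i).2 - (v.1 i).1, (v.1 i).2)) (σpar.symm (Sum.inl o)) = _
      have : σpar.symm (Sum.inl o) = (o : Fin r) := rfl
      rw [this]
      rfl
    · show (fun i => (snf.a i * (v.1 i).2 - (v.1 i).1, (v.1 i).2)) (σpar.symm (Sum.inr e)) = _
      have : σpar.symm (Sum.inr e) = (e : Fin r) := rfl
      rw [this]
      rfl
  -- step 6: normalize each 2x2 block
  have hko : ∀ o : O, ∃ k, snf.a o.1 = 2 * k + 1 := fun o => o.2
  choose ko hko' using hko
  have hke : ∀ e : Ety, ∃ k, snf.a e.1 = k + k := fun e =>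
    (Int.not_odd_iff_even.mp e.2)
  choose ke hke' using hke
  set e6 : ((O → ℤ × ℤ) × (Ety → ℤ × ℤ)) × (κ → ℤ) × (ιC → ℤ) ≃+
      ((O → ℤ × ℤ) × (Ety → ℤ × ℤ)) × (κ → ℤ) × (ιC → ℤ) :=
    AddEquiv.prodCongr
      (AddEquiv.prodCongr (AddEquiv.piCongrRight fun o => oddEquiv (ko o))
        (AddEquiv.piCongrRight fun e => evenEquiv (ke e)))
      (AddEquiv.refl _) with he6
  have H6' : ∀ u : ((O → ℤ × ℤ) × (Ety → ℤ × ℤ)) × (κ → ℤ) × (ιC → ℤ),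
      e6 ((fun o => (snf.a o.1 * (u.1.1 o).2 - (u.1.1 o).1, (u.1.1 o).2),
          fun e => (snf.a e.1 * (u.1.2 e).2 - (u.1.2 e).1, (u.1.2 e).2)),
          u.2.1, fun j => -(u.2.2 j)) =
      (fun w : ((O → ℤ × ℤ) × (Ety → ℤ × ℤ)) × (κ → ℤ) × (ιC → ℤ) =>
        ((fun o => (w.1.1 o).swap, fun e => ((w.1.2 e).1, -(w.1.2 e).2)),
          w.2.1, fun j => -(w.2.2 j))) (e6 u) := by
    intro u
    refine Prod.ext (Prod.ext (funext fun o => ?_) (funext fun e => ?_)) rfl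
    · show oddEquiv (ko o) (snf.a o.1 * (u.1.1 o).2 - (u.1.1 o).1, (u.1.1 o).2) = _
      rw [hko' o, oddEquiv_conj]
      rfl
    · show evenEquiv (ke e) (snf.a e.1 * (u.1.2 e).2 - (u.1.2 e).1, (u.1.2 e).2) = _
      rw [hke' e, evenEquiv_conj]
      rfl
  -- step 7: final regroup
  set e7 := (finalRegroup (α := O) (β := ιC) (γ := κ) (δ := Ety)) with he7
  have H7' : ∀ w : ((O → ℤ × ℤ) × (Ety → ℤ × ℤ)) × (κ → ℤ) × (ιC → ℤ),
      e7 (((fun o => (w.1.1 o).swap, fun e => ((w.1.2 e).1, -(w.1.2 e).2)),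
          w.2.1, fun j => -(w.2.2 j))) =
      (fun z : (O → ℤ × ℤ) × ((κ ⊕ Ety) → ℤ) × ((ιC ⊕ Ety) → ℤ) =>
        (fun o => (z.1 o).swap, z.2.1, fun j => -(z.2.2 j))) (e7 w) := by
    intro w
    refine Prod.ext rfl (Prod.ext ?_ ?_) <;> ext (j | e) <;> rfl
  -- step 8: reindex everything by Fin
  haveI : Fintype ιC := Fintype.ofFinite ιC
  haveI : Fintype O := Fintype.ofFinite O
  haveI : Fintype Ety := Fintype.ofFinite Ety
  set e8 : (O → ℤ × ℤ) × ((κ ⊕ Ety) → ℤ) × ((ιC ⊕ Ety) → ℤ) ≃+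
      (Fin (Fintype.card O) → ℤ × ℤ) × (Fin (Fintype.card (κ ⊕ Ety)) → ℤ) ×
        (Fin (Fintype.card (ιC ⊕ Ety)) → ℤ) :=
    AddEquiv.prodCongr (arrCongr (Fintype.equivFin O))
      (AddEquiv.prodCongr (arrCongr (Fintype.equivFin (κ ⊕ Ety)))
        (arrCongr (Fintype.equivFin (ιC ⊕ Ety)))) with he8
  have H8' : ∀ z : (O → ℤ × ℤ) × ((κ ⊕ Ety) → ℤ) × ((ιC ⊕ Ety) → ℤ),
      e8 ((fun o => (z.1 o).swap, z.2.1, fun j => -(z.2.2 j))) =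
      (fun y : (Fin (Fintype.card O) → ℤ × ℤ) × (Fin (Fintype.card (κ ⊕ Ety)) → ℤ) ×
          (Fin (Fintype.card (ιC ⊕ Ety)) → ℤ) =>
        (fun i => (y.1 i).swap, y.2.1, fun i => -(y.2.2 i))) (e8 z) := fun z => rfl
  -- assemble
  have H2 := step τ E1 e2
    (fun y => (φ y.2 - y.1, y.2))
    (fun z => ((z.2.2 : ↥P) - z.1, z.2)) H1 H2'
  have H3 := step τ (E1.trans e2) e3
    (fun z => ((z.2.2 : ↥P) - z.1, z.2))
    (fun w => ((fun i => snf.a i * w.2.2 i - w.1.1 i, fun j => -(w.1.2 j)), w.2)) H2 H3'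
  have H4 := step τ ((E1.trans e2).trans e3) e4
    (fun w => ((fun i => snf.a i * w.2.2 i - w.1.1 i, fun j => -(w.1.2 j)), w.2))
    (fun v => ((fun i => (snf.a i * (v.1 i).2 - (v.1 i).1, (v.1 i).2)), v.2.1,
      fun j => -(v.2.2 j))) H3 H4'
  have H5 := step τ (((E1.trans e2).trans e3).trans e4) e5
    (fun v => ((fun i => (snf.a i * (v.1 i).2 - (v.1 i).1, (v.1 i).2)), v.2.1,
      fun j => -(v.2.2 j)))
    (fun u => ((fun o => (snf.a o.1 * (u.1.1 o).2 - (u.1.1 o).1, (u.1.1 o).2),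
      fun e => (snf.a e.1 * (u.1.2 e).2 - (u.1.2 e).1, (u.1.2 e).2)),
      u.2.1, fun j => -(u.2.2 j))) H4 H5'
  have H6 := step τ ((((E1.trans e2).trans e3).trans e4).trans e5) e6
    (fun u => ((fun o => (snf.a o.1 * (u.1.1 o).2 - (u.1.1 o).1, (u.1.1 o).2),
      fun e => (snf.a e.1 * (u.1.2 e).2 - (u.1.2 e).1, (u.1.2 e).2)),
      u.2.1, fun j => -(u.2.2 j)))
    (fun w => ((fun o => (w.1.1 o).swap, fun e => ((w.1.2 e).1, -(w.1.2 e).2)),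
      w.2.1, fun j => -(w.2.2 j))) H5 H6'
  have H7 := step τ (((((E1.trans e2).trans e3).trans e4).trans e5).trans e6) e7
    (fun w => ((fun o => (w.1.1 o).swap, fun e => ((w.1.2 e).1, -(w.1.2 e).2)),
      w.2.1, fun j => -(w.2.2 j)))
    (fun z => (fun o => (z.1 o).swap, z.2.1, fun j => -(z.2.2 j))) H6 H7'
  have H8 := step τ ((((((E1.trans e2).trans e3).trans e4).trans e5).trans e6).trans e7) e8
    (fun z => (fun o => (z.1 o).swap, z.2.1, fun j => -(z.2.2 j)))
    (fun y => (fun i => (y.1 i).swap, y.2.1, fun i => -(y.2.2 i))) H7 H8'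
  exact ⟨Fintype.card O, Fintype.card (κ ⊕ Ety), Fintype.card (ιC ⊕ Ety),
    (((((((E1.trans e2).trans e3).trans e4).trans e5).trans e6).trans e7).trans e8), H8⟩
end
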